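/- Let s > −1/2. There exists a constant C = C(s) > 0 such that for all nonnegative sequences a, b, c : ℤ → [0,∞), the sequence F : ℤ → [0,∞] defined by F_0 = 0 and, for k ≠ 0, F_k = Σ a(k1)·b(k2)·c(k3)/|k3|, where the sum ranges over all triples (k1,k2,k3) ∈ Γ0(k) with k1 + k2 ≠ 0 and k3 ≠ 0, satisfies ‖F‖_{H^s} ≤ C·‖a‖_{H^s}·‖b‖_{H^s}·‖c‖_{H^s} (the inequality holding in [0,∞]). -/

import Mathlib

open scoped ENNReal

/-- The `H^s` norm of a sequence indexed by `ℤ`, with values in `[0,∞]`. -/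
noncomputable def HsE (s : ℝ) (a : ℤ → ℝ≥0∞) : ℝ≥0∞ :=
  (∑' k : ℤ, ENNReal.ofReal ((1 + (k : ℝ) ^ 2) ^ s) * a k ^ 2) ^ (1 / 2 : ℝ)

private lemma sq_half (x : ℝ≥0∞) : (x ^ (1 / 2 : ℝ)) ^ 2 = x := by
  rw [← ENNReal.rpow_natCast (x ^ (1 / 2 : ℝ)) 2, ← ENNReal.rpow_mul]
  norm_num

private lemma four_half : ((4 : ℝ≥0∞)) ^ (1 / 2 : ℝ) = 2 := by
  rw [show (4 : ℝ≥0∞) = 2 ^ (2 : ℕ) by norm_num, ← ENNReal.rpow_natCast,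
    ← ENNReal.rpow_mul]
  norm_num

open MeasureTheory in
private lemma tsum_CS (f g : ℤ → ℝ≥0∞) :
    ∑' m : ℤ, f m * g m
      ≤ (∑' m : ℤ, f m ^ 2) ^ (1 / 2 : ℝ) * (∑' m : ℤ, g m ^ 2) ^ (1 / 2 : ℝ) := by
  have hpq : (2 : ℝ).HolderConjugate 2 := Real.HolderConjugate.two_two
  have h := ENNReal.lintegral_mul_le_Lp_mul_Lq (Measure.count : Measure ℤ) hpq
    (measurable_of_countable f).aemeasurable (measurable_of_countable g).aemeasurable
  simp only [Pi.mul_apply, lintegral_count] at h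
  have h2 : ∀ x : ℝ≥0∞, x ^ (2 : ℝ) = x ^ 2 := fun x => by
    rw [← ENNReal.rpow_natCast x 2]; norm_num
  simpa [h2] using h

private lemma HsE_mono {s : ℝ} {f g : ℤ → ℝ≥0∞} (h : ∀ k, f k ≤ g k) :
    HsE s f ≤ HsE s g := by
  apply ENNReal.rpow_le_rpow _ (by norm_num)
  exact ENNReal.tsum_le_tsum fun k => mul_le_mul_right (pow_le_pow_left' (h k) 2) _

private lemma HsE_const_mul (s : ℝ) (t : ℝ≥0∞) (f : ℤ → ℝ≥0∞) :
    HsE s (fun k => t * f k) = t * HsE s f := by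
  unfold HsE
  have h1 : ∀ k : ℤ, ENNReal.ofReal ((1 + (k : ℝ) ^ 2) ^ s) * (t * f k) ^ 2
      = t ^ 2 * (ENNReal.ofReal ((1 + (k : ℝ) ^ 2) ^ s) * f k ^ 2) := fun k => by ring
  simp only [h1]
  rw [ENNReal.tsum_mul_left, ENNReal.mul_rpow_of_nonneg _ _ (by norm_num : (0:ℝ) ≤ 1/2),
    ← ENNReal.rpow_natCast t 2, ← ENNReal.rpow_mul]
  norm_num

private lemma HsE_add_le (s : ℝ) (f g : ℤ → ℝ≥0∞) :
    HsE s (fun k => f k + g k) ≤ 2 * (HsE s f + HsE s g) := by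
  have hsq : ∀ x y : ℝ≥0∞, (x + y) ^ 2 ≤ 4 * x ^ 2 + 4 * y ^ 2 := by
    intro x y
    have hxy : x * y ≤ x ^ 2 + y ^ 2 := by
      rcases le_total x y with h | h
      · calc x * y ≤ y * y := mul_le_mul_left h y
          _ = y ^ 2 := (sq y).symm
          _ ≤ x ^ 2 + y ^ 2 := le_add_self
      · calc x * y ≤ x * x := mul_le_mul_right h x
          _ = x ^ 2 := (sq x).symm
          _ ≤ x ^ 2 + y ^ 2 := le_add_right le_rfl
    calc (x + y) ^ 2 = x ^ 2 + y ^ 2 + 2 * (x * y) := by ring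
      _ ≤ x ^ 2 + y ^ 2 + 2 * (x ^ 2 + y ^ 2) := by
          exact add_le_add_right (mul_le_mul_right hxy 2) _
      _ = 3 * x ^ 2 + 3 * y ^ 2 := by ring
      _ ≤ 4 * x ^ 2 + 4 * y ^ 2 :=
          add_le_add (mul_le_mul_left (by norm_num) _) (mul_le_mul_left (by norm_num) _)
  unfold HsE
  set W : ℤ → ℝ≥0∞ := fun k => ENNReal.ofReal ((1 + (k : ℝ) ^ 2) ^ s) with hW
  calc (∑' k : ℤ, W k * (f k + g k) ^ 2) ^ (1 / 2 : ℝ)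
      ≤ (∑' k : ℤ, (4 * (W k * f k ^ 2) + 4 * (W k * g k ^ 2))) ^ (1 / 2 : ℝ) := by
        apply ENNReal.rpow_le_rpow _ (by norm_num)
        apply ENNReal.tsum_le_tsum
        intro k
        calc W k * (f k + g k) ^ 2 ≤ W k * (4 * f k ^ 2 + 4 * g k ^ 2) :=
              mul_le_mul_right (hsq _ _) _
          _ = 4 * (W k * f k ^ 2) + 4 * (W k * g k ^ 2) := by ring
    _ = (4 * ∑' k : ℤ, W k * f k ^ 2 + 4 * ∑' k : ℤ, W k * g k ^ 2) ^ (1 / 2 : ℝ) := by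
        rw [ENNReal.tsum_add, ENNReal.tsum_mul_left, ENNReal.tsum_mul_left]
    _ ≤ (4 * ∑' k : ℤ, W k * f k ^ 2) ^ (1 / 2 : ℝ)
        + (4 * ∑' k : ℤ, W k * g k ^ 2) ^ (1 / 2 : ℝ) :=
        ENNReal.rpow_add_le_add_rpow _ _ (by norm_num) (by norm_num)
    _ = 2 * ((∑' k : ℤ, W k * f k ^ 2) ^ (1 / 2 : ℝ)
        + (∑' k : ℤ, W k * g k ^ 2) ^ (1 / 2 : ℝ)) := by
        rw [ENNReal.mul_rpow_of_nonneg _ _ (by norm_num : (0:ℝ) ≤ 1/2),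
          ENNReal.mul_rpow_of_nonneg _ _ (by norm_num : (0:ℝ) ≤ 1/2), four_half, mul_add]

private lemma key_real {s : ℝ} (hs : -(1 / 2 : ℝ) < s) (m : ℤ) (hm : m ≠ 0) :
    ((m.natAbs : ℝ))⁻¹ ≤ (max 1 (2 ^ (-s)) : ℝ) * (1 + (m : ℝ) ^ 2) ^ s := by
  set t : ℝ := (m.natAbs : ℝ) with ht
  have ht1 : 1 ≤ t := by
    have : 1 ≤ m.natAbs := Nat.one_le_iff_ne_zero.mpr (Int.natAbs_ne_zero.mpr hm)
    rw [ht]; exact_mod_cast this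
  have ht0 : (0:ℝ) < t := lt_of_lt_of_le one_pos ht1
  have hsq : 1 + (m : ℝ) ^ 2 = 1 + t ^ 2 := by
    rw [ht, Nat.cast_natAbs]
    push_cast
    rw [sq_abs]
  have hpos : (0:ℝ) < 1 + (m : ℝ) ^ 2 := by positivity
  have hrnn : (0:ℝ) ≤ (1 + (m : ℝ) ^ 2) ^ s := Real.rpow_nonneg hpos.le s
  rcases le_or_gt 0 s with h0 | h0
  · have h1 : (1:ℝ) ≤ (1 + (m : ℝ) ^ 2) ^ s :=
      Real.one_le_rpow (by nlinarith) h0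
    calc t⁻¹ ≤ 1 := inv_le_one_of_one_le₀ ht1
      _ ≤ (1 + (m : ℝ) ^ 2) ^ s := h1
      _ = 1 * (1 + (m : ℝ) ^ 2) ^ s := (one_mul _).symm
      _ ≤ max 1 (2 ^ (-s)) * (1 + (m : ℝ) ^ 2) ^ s :=
          mul_le_mul_of_nonneg_right (le_max_left _ _) hrnn
  · have hub : (2 * t ^ 2 : ℝ) ^ s ≤ (1 + (m : ℝ) ^ 2) ^ s := by
      rw [hsq]
      exact Real.rpow_le_rpow_of_nonpos (by positivity) (by nlinarith) h0.le
    have heq : (2 * t ^ 2 : ℝ) ^ s = 2 ^ s * t ^ (2 * s) := by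
      rw [Real.mul_rpow (by norm_num) (by positivity), ← Real.rpow_natCast t 2,
        ← Real.rpow_mul ht0.le]
      norm_num [mul_comm]
    calc t⁻¹ = t ^ (-1 : ℝ) := (Real.rpow_neg_one t).symm
      _ ≤ t ^ (2 * s) := Real.rpow_le_rpow_of_exponent_le ht1 (by linarith)
      _ = 2 ^ (-s) * (2 ^ s * t ^ (2 * s)) := by
          rw [← mul_assoc, ← Real.rpow_add two_pos]
          norm_num
      _ = 2 ^ (-s) * (2 * t ^ 2 : ℝ) ^ s := by rw [heq]
      _ ≤ 2 ^ (-s) * (1 + (m : ℝ) ^ 2) ^ s :=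
          mul_le_mul_of_nonneg_left hub (Real.rpow_nonneg (by norm_num) _)
      _ ≤ max 1 (2 ^ (-s)) * (1 + (m : ℝ) ^ 2) ^ s :=
          mul_le_mul_of_nonneg_right (le_max_right _ _) hrnn

private lemma T_bound {s : ℝ} (hs : -(1 / 2 : ℝ) < s) (u v : ℤ → ℝ≥0∞) :
    (∑' m : ℤ, if m ≠ 0 then u (-m) * v m / (m.natAbs : ℝ≥0∞) else 0)
      ≤ ENNReal.ofReal (max 1 (2 ^ (-s))) * (HsE s u * HsE s v) := by
  set C₀ : ℝ := max 1 (2 ^ (-s)) with hC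
  have hC₀ : (0:ℝ) ≤ C₀ := le_trans zero_le_one (le_max_left _ _)
  set W : ℤ → ℝ≥0∞ := fun k => ENNReal.ofReal ((1 + (k : ℝ) ^ 2) ^ s) with hW
  have hpt : ∀ m : ℤ, (if m ≠ 0 then u (-m) * v m / (m.natAbs : ℝ≥0∞) else 0)
      ≤ ENNReal.ofReal C₀ * ((W m ^ (1/2:ℝ) * u (-m)) * (W m ^ (1/2:ℝ) * v m)) := by
    intro m
    split_ifs with hm
    · have hmpos : (0:ℝ) < (m.natAbs : ℝ) := by
        have : 1 ≤ m.natAbs := Nat.one_le_iff_ne_zero.mpr (Int.natAbs_ne_zero.mpr hm)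
        exact_mod_cast Nat.lt_of_lt_of_le Nat.zero_lt_one this
      have hinv : ((m.natAbs : ℝ≥0∞))⁻¹ ≤ ENNReal.ofReal C₀ * W m := by
        have h1 : ((m.natAbs : ℝ≥0∞))⁻¹ = ENNReal.ofReal ((m.natAbs : ℝ))⁻¹ := by
          rw [ENNReal.ofReal_inv_of_pos hmpos, ENNReal.ofReal_natCast]
        rw [h1, hW, ← ENNReal.ofReal_mul hC₀]
        exact ENNReal.ofReal_le_ofReal (key_real hs m hm)
      calc u (-m) * v m / (m.natAbs : ℝ≥0∞)
          = (m.natAbs : ℝ≥0∞)⁻¹ * (u (-m) * v m) := by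
            rw [div_eq_mul_inv]; ring
        _ ≤ (ENNReal.ofReal C₀ * W m) * (u (-m) * v m) := mul_le_mul_left hinv _
        _ = ENNReal.ofReal C₀ * ((W m ^ (1/2:ℝ) * u (-m)) * (W m ^ (1/2:ℝ) * v m)) := by
            rw [show (W m ^ (1/2:ℝ) * u (-m)) * (W m ^ (1/2:ℝ) * v m)
                = (W m ^ (1/2:ℝ)) ^ 2 * (u (-m) * v m) by ring, sq_half]
            ring
    · exact zero_le
  have hre : (∑' m : ℤ, (W m ^ (1/2:ℝ) * u (-m)) ^ 2)
      = ∑' k : ℤ, W k * u k ^ 2 := by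
    have h1 : ∀ m : ℤ, (W m ^ (1/2:ℝ) * u (-m)) ^ 2 = W (-m) * u (-m) ^ 2 := by
      intro m
      have hWneg : W (-m) = W m := by simp [hW]
      rw [mul_pow, sq_half, hWneg]
    rw [tsum_congr h1]
    exact (Equiv.neg ℤ).tsum_eq (fun k => W k * u k ^ 2)
  have hre2 : (∑' m : ℤ, (W m ^ (1/2:ℝ) * v m) ^ 2) = ∑' k : ℤ, W k * v k ^ 2 := by
    refine tsum_congr fun m => ?_
    rw [mul_pow, sq_half]
  calc (∑' m : ℤ, if m ≠ 0 then u (-m) * v m / (m.natAbs : ℝ≥0∞) else 0)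
      ≤ ∑' m : ℤ, ENNReal.ofReal C₀
          * ((W m ^ (1/2:ℝ) * u (-m)) * (W m ^ (1/2:ℝ) * v m)) :=
        ENNReal.tsum_le_tsum hpt
    _ = ENNReal.ofReal C₀
          * ∑' m : ℤ, (W m ^ (1/2:ℝ) * u (-m)) * (W m ^ (1/2:ℝ) * v m) :=
        ENNReal.tsum_mul_left
    _ ≤ ENNReal.ofReal C₀ * ((∑' m : ℤ, (W m ^ (1/2:ℝ) * u (-m)) ^ 2) ^ (1/2:ℝ)
          * (∑' m : ℤ, (W m ^ (1/2:ℝ) * v m) ^ 2) ^ (1/2:ℝ)) :=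
        mul_le_mul_right (tsum_CS _ _) _
    _ = ENNReal.ofReal C₀ * (HsE s u * HsE s v) := by
        rw [hre, hre2]; rfl

theorem stmt6 (s : ℝ) (hs : -(1 / 2 : ℝ) < s) :
    ∃ C : ℝ, 0 < C ∧ ∀ a b c : ℤ → NNReal,
      HsE s (fun k =>
        if k = 0 then 0 else
          ∑' p : ℤ × ℤ × ℤ,
            if p.1 + p.2.1 + p.2.2 = k ∧
               (p.1 + p.2.1) * (p.1 + p.2.2) * (p.2.1 + p.2.2) = 0 ∧
               p.1 + p.2.1 ≠ 0 ∧ p.2.2 ≠ 0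
            then (a p.1 : ℝ≥0∞) * (b p.2.1 : ℝ≥0∞) * (c p.2.2 : ℝ≥0∞) /
                (p.2.2.natAbs : ℝ≥0∞)
            else 0)
      ≤ ENNReal.ofReal C * HsE s (fun k => (a k : ℝ≥0∞)) *
          HsE s (fun k => (b k : ℝ≥0∞)) * HsE s (fun k => (c k : ℝ≥0∞)) := by
  refine ⟨4 * max 1 (2 ^ (-s)), by positivity, ?_⟩
  intro a b c
  set C₀ : ℝ := max 1 (2 ^ (-s)) with hC
  set Ta : ℝ≥0∞ := ∑' m : ℤ,
    if m ≠ 0 then (a (-m) : ℝ≥0∞) * (c m : ℝ≥0∞) / (m.natAbs : ℝ≥0∞) else 0 with hTa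
  set Tb : ℝ≥0∞ := ∑' m : ℤ,
    if m ≠ 0 then (b (-m) : ℝ≥0∞) * (c m : ℝ≥0∞) / (m.natAbs : ℝ≥0∞) else 0 with hTb
  have key : ∀ k : ℤ,
      (if k = 0 then 0 else
        ∑' p : ℤ × ℤ × ℤ,
          if p.1 + p.2.1 + p.2.2 = k ∧
             (p.1 + p.2.1) * (p.1 + p.2.2) * (p.2.1 + p.2.2) = 0 ∧
             p.1 + p.2.1 ≠ 0 ∧ p.2.2 ≠ 0
          then (a p.1 : ℝ≥0∞) * (b p.2.1 : ℝ≥0∞) * (c p.2.2 : ℝ≥0∞) /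
              (p.2.2.natAbs : ℝ≥0∞)
          else 0)
      ≤ Ta * (b k : ℝ≥0∞) + Tb * (a k : ℝ≥0∞) := by
    intro k
    split_ifs with hk
    · exact zero_le
    set g1 : ℤ × ℤ × ℤ → ℝ≥0∞ := fun p =>
      if p.1 + p.2.1 + p.2.2 = k ∧ p.1 + p.2.2 = 0 ∧ p.2.2 ≠ 0
      then (a p.1 : ℝ≥0∞) * (b p.2.1 : ℝ≥0∞) * (c p.2.2 : ℝ≥0∞) / (p.2.2.natAbs : ℝ≥0∞)
      else 0 with hg1
    set g2 : ℤ × ℤ × ℤ → ℝ≥0∞ := fun p =>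
      if p.1 + p.2.1 + p.2.2 = k ∧ p.2.1 + p.2.2 = 0 ∧ p.2.2 ≠ 0
      then (a p.1 : ℝ≥0∞) * (b p.2.1 : ℝ≥0∞) * (c p.2.2 : ℝ≥0∞) / (p.2.2.natAbs : ℝ≥0∞)
      else 0 with hg2
    have hle : ∀ p : ℤ × ℤ × ℤ,
        (if p.1 + p.2.1 + p.2.2 = k ∧
             (p.1 + p.2.1) * (p.1 + p.2.2) * (p.2.1 + p.2.2) = 0 ∧
             p.1 + p.2.1 ≠ 0 ∧ p.2.2 ≠ 0
          then (a p.1 : ℝ≥0∞) * (b p.2.1 : ℝ≥0∞) * (c p.2.2 : ℝ≥0∞) /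
              (p.2.2.natAbs : ℝ≥0∞)
          else 0) ≤ g1 p + g2 p := by
      intro p
      split_ifs with hcond
      · obtain ⟨hsum, hprod, hne, h3⟩ := hcond
        rcases mul_eq_zero.mp hprod with h | h
        · rcases mul_eq_zero.mp h with h | h
          · exact absurd h hne
          · calc (a p.1 : ℝ≥0∞) * (b p.2.1 : ℝ≥0∞) * (c p.2.2 : ℝ≥0∞) /
                (p.2.2.natAbs : ℝ≥0∞) = g1 p := by rw [hg1]; simp only
                                                   rw [if_pos ⟨hsum, h, h3⟩]
              _ ≤ g1 p + g2 p := le_add_right le_rfl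
        · calc (a p.1 : ℝ≥0∞) * (b p.2.1 : ℝ≥0∞) * (c p.2.2 : ℝ≥0∞) /
              (p.2.2.natAbs : ℝ≥0∞) = g2 p := by rw [hg2]; simp only
                                                 rw [if_pos ⟨hsum, h, h3⟩]
            _ ≤ g1 p + g2 p := le_add_self
      · exact zero_le
    refine le_trans (ENNReal.tsum_le_tsum hle) ?_
    rw [ENNReal.tsum_add]
    have comp1 : ∑' p : ℤ × ℤ × ℤ, g1 p ≤ Ta * (b k : ℝ≥0∞) := by
      have hinj : Function.Injective (fun m : ℤ => ((-m, k, m) : ℤ × ℤ × ℤ)) := by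
        intro x y h
        simpa using congrArg (fun p : ℤ × ℤ × ℤ => p.2.2) h
      have hsupp : Function.support g1
          ⊆ Set.range (fun m : ℤ => ((-m, k, m) : ℤ × ℤ × ℤ)) := by
        intro p hp
        rw [Function.mem_support, hg1] at hp
        simp only at hp
        by_cases hcond : p.1 + p.2.1 + p.2.2 = k ∧ p.1 + p.2.2 = 0 ∧ p.2.2 ≠ 0
        · refine ⟨p.2.2, ?_⟩
          obtain ⟨h1, h2, h3⟩ := hcond
          have hp1 : p.1 = -p.2.2 := by omega
          have hp2 : p.2.1 = k := by omega
          simp only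
          rw [← hp1, ← hp2]
        · rw [if_neg hcond] at hp
          exact absurd rfl hp
      have heq := hinj.tsum_eq hsupp
      rw [← heq]
      have hterm : ∀ m : ℤ, g1 ((-m, k, m) : ℤ × ℤ × ℤ)
          = (b k : ℝ≥0∞) * (if m ≠ 0 then (a (-m) : ℝ≥0∞) * (c m : ℝ≥0∞)
              / (m.natAbs : ℝ≥0∞) else 0) := by
        intro m
        rw [hg1]
        by_cases hm : m = 0
        · simp [hm]
        · simp only
          rw [if_pos ⟨by ring, by ring, hm⟩, if_pos hm, div_eq_mul_inv, div_eq_mul_inv]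
          ring
      rw [tsum_congr hterm, ENNReal.tsum_mul_left, mul_comm]
    have comp2 : ∑' p : ℤ × ℤ × ℤ, g2 p ≤ Tb * (a k : ℝ≥0∞) := by
      have hinj : Function.Injective (fun m : ℤ => ((k, -m, m) : ℤ × ℤ × ℤ)) := by
        intro x y h
        simpa using congrArg (fun p : ℤ × ℤ × ℤ => p.2.2) h
      have hsupp : Function.support g2
          ⊆ Set.range (fun m : ℤ => ((k, -m, m) : ℤ × ℤ × ℤ)) := by
        intro p hp
        rw [Function.mem_support, hg2] at hp
        simp only at hp
        by_cases hcond : p.1 + p.2.1 + p.2.2 = k ∧ p.2.1 + p.2.2 = 0 ∧ p.2.2 ≠ 0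
        · refine ⟨p.2.2, ?_⟩
          obtain ⟨h1, h2, h3⟩ := hcond
          have hp1 : p.2.1 = -p.2.2 := by omega
          have hp2 : p.1 = k := by omega
          simp only
          rw [← hp1, ← hp2]
        · rw [if_neg hcond] at hp
          exact absurd rfl hp
      have heq := hinj.tsum_eq hsupp
      rw [← heq]
      have hterm : ∀ m : ℤ, g2 ((k, -m, m) : ℤ × ℤ × ℤ)
          = (a k : ℝ≥0∞) * (if m ≠ 0 then (b (-m) : ℝ≥0∞) * (c m : ℝ≥0∞)
              / (m.natAbs : ℝ≥0∞) else 0) := by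
        intro m
        rw [hg2]
        by_cases hm : m = 0
        · simp [hm]
        · simp only
          rw [if_pos ⟨by ring, by ring, hm⟩, if_pos hm, div_eq_mul_inv, div_eq_mul_inv]
          ring
      rw [tsum_congr hterm, ENNReal.tsum_mul_left, mul_comm]
    exact add_le_add comp1 comp2
  refine le_trans (HsE_mono key) ?_
  refine le_trans (HsE_add_le s _ _) ?_
  rw [HsE_const_mul, HsE_const_mul]
  have h1 : Ta ≤ ENNReal.ofReal C₀
      * (HsE s (fun k => (a k : ℝ≥0∞)) * HsE s (fun k => (c k : ℝ≥0∞))) :=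
    T_bound hs _ _
  have h2 : Tb ≤ ENNReal.ofReal C₀
      * (HsE s (fun k => (b k : ℝ≥0∞)) * HsE s (fun k => (c k : ℝ≥0∞))) :=
    T_bound hs _ _
  set Ha := HsE s (fun k => (a k : ℝ≥0∞))
  set Hb := HsE s (fun k => (b k : ℝ≥0∞))
  set Hc := HsE s (fun k => (c k : ℝ≥0∞))
  calc 2 * (Ta * Hb + Tb * Ha)
      ≤ 2 * (ENNReal.ofReal C₀ * (Ha * Hc) * Hb + ENNReal.ofReal C₀ * (Hb * Hc) * Ha) := by
        gcongr
    _ = (4 * ENNReal.ofReal C₀) * Ha * Hb * Hc := by ring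
    _ = ENNReal.ofReal (4 * C₀) * Ha * Hb * Hc := by
        rw [ENNReal.ofReal_mul (by norm_num : (0:ℝ) ≤ 4), ENNReal.ofReal_ofNat]
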